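/- In the equilateral-triangle configuration with side length ℓ > 0, there is no causal curve passing through all three causal diamonds: there do not exist points p_0 ∈ D_0, p_1 ∈ D_1, p_2 ∈ D_2 and a permutation σ of {0,1,2} such that p_{σ(0)} ≼ p_{σ(1)} ≼ p_{σ(2)}. -/

import Mathlib

/-- The causal relation on (2+1)-dimensional Minkowski space (units with `c = 1`):
`(t, x) ≼ (s, y)` iff `s - t ≥ ‖y - x‖`. -/
def causal (p q : ℝ × EuclideanSpace ℝ (Fin 2)) : Prop :=
  ‖q.2 - p.2‖ ≤ q.1 - p.1

/-- The causal diamond `D(y,z)`. -/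
def diamond (y z : ℝ × EuclideanSpace ℝ (Fin 2)) : Set (ℝ × EuclideanSpace ℝ (Fin 2)) :=
  {p | causal y p ∧ causal p z}

/-- The call points: the vertices of an equilateral triangle of side `ℓ` at time `0`. -/
noncomputable def callPt (ℓ : ℝ) : Fin 3 → ℝ × EuclideanSpace ℝ (Fin 2) :=
  ![(0, !₂[0, 0]), (0, !₂[ℓ, 0]), (0, !₂[ℓ / 2, Real.sqrt 3 / 2 * ℓ])]

/-- The reveal points: the midpoints of the edges of the triangle at time `ℓ / 2`,
`z j` over the midpoint of `y j` and `y (j+1)`. -/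
noncomputable def revealPt (ℓ : ℝ) : Fin 3 → ℝ × EuclideanSpace ℝ (Fin 2) :=
  ![(ℓ / 2, !₂[ℓ / 2, 0]), (ℓ / 2, !₂[3 * ℓ / 4, Real.sqrt 3 / 4 * ℓ]),
    (ℓ / 2, !₂[ℓ / 4, Real.sqrt 3 / 4 * ℓ])]

noncomputable def ev (x y : ℝ) : EuclideanSpace ℝ (Fin 2) := !₂[x, y]

lemma two_norm_sq (v : EuclideanSpace ℝ (Fin 2)) : ‖v‖^2 = (v 0)^2 + (v 1)^2 := by
  rw [EuclideanSpace.norm_eq, Real.sq_sqrt (by positivity)]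
  simp [Fin.sum_univ_two, Real.norm_eq_abs, sq_abs]

lemma norm_eq_of (v : EuclideanSpace ℝ (Fin 2)) (c : ℝ) (hc : 0 ≤ c)
    (h : (v 0)^2 + (v 1)^2 = c^2) : ‖v‖ = c := by
  have h1 : ‖v‖^2 = c^2 := (two_norm_sq v).trans h
  calc ‖v‖ = Real.sqrt (‖v‖^2) := (Real.sqrt_sq (norm_nonneg v)).symm
    _ = Real.sqrt (c^2) := by rw [h1]
    _ = c := Real.sqrt_sq hc

lemma sq_of_norm_eq (v : EuclideanSpace ℝ (Fin 2)) (c : ℝ) (h : ‖v‖ = c) :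
    (v 0)^2 + (v 1)^2 = c^2 := by rw [← two_norm_sq, h]

lemma chainEq {E : Type*} [SeminormedAddCommGroup E] (L t s : ℝ) (yj mj yk mk P Q : E)
    (e1 : ‖mk - yj‖ = L/2) (e2 : ‖mj - yj‖ = L/2) (e3 : ‖mk - yk‖ = L/2)
    (h1 : ‖P - yj‖ ≤ t) (h2 : ‖mj - P‖ ≤ L/2 - t)
    (h3 : ‖Q - yk‖ ≤ s) (h4 : ‖mk - Q‖ ≤ L/2 - s)
    (h5 : ‖Q - P‖ ≤ s - t) :
    ‖P - yj‖ = t ∧ ‖mj - P‖ = L/2 - t ∧ ‖mk - P‖ = L/2 - t ∧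
    ‖Q - yk‖ = s ∧ ‖mk - Q‖ = L/2 - s ∧ ‖Q - P‖ = s - t := by
  have T1 : dist mk yj ≤ dist mk Q + dist Q P + dist P yj := dist_triangle4 _ _ _ _
  have T2 : dist mk P ≤ dist mk Q + dist Q P := dist_triangle _ _ _
  have T3 : dist mk yj ≤ dist mk P + dist P yj := dist_triangle _ _ _
  have T4 : dist mj yj ≤ dist mj P + dist P yj := dist_triangle _ _ _
  have T5 : dist mk yk ≤ dist mk Q + dist Q yk := dist_triangle _ _ _
  simp only [dist_eq_norm] at T1 T2 T3 T4 T5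
  refine ⟨le_antisymm h1 (by linarith), le_antisymm h2 (by linarith),
    le_antisymm (by linarith) (by linarith), le_antisymm h3 (by linarith),
    le_antisymm h4 (by linarith), le_antisymm h5 (by linarith)⟩

lemma forbidden {L t s : ℝ} (hL : 0 < L) (yj mk P Q : EuclideanSpace ℝ (Fin 2))
    (e1 : ‖mk - yj‖ = Real.sqrt 3 * L / 2)
    (h1 : ‖P - yj‖ ≤ t) (h4 : ‖mk - Q‖ ≤ L/2 - s) (h5 : ‖Q - P‖ ≤ s - t) : False := by
  have T1 : dist mk yj ≤ dist mk Q + dist Q P + dist P yj := dist_triangle4 _ _ _ _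
  simp only [dist_eq_norm] at T1
  have hr3 : Real.sqrt 3 ^ 2 = 3 := Real.sq_sqrt (by norm_num)
  have hr0 : (0:ℝ) ≤ Real.sqrt 3 := Real.sqrt_nonneg 3
  have h6 : Real.sqrt 3 * L ≤ L := by linarith
  have h7 : Real.sqrt 3 * (Real.sqrt 3 * L) ≤ Real.sqrt 3 * L :=
    mul_le_mul_of_nonneg_left h6 hr0
  nlinarith [h7, hr3, hL, h6]

set_option maxHeartbeats 2000000 in
lemma key (ℓ : ℝ) (hℓ : 0 < ℓ) (j k : Fin 3) (hjk : j ≠ k)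
    (p q : ℝ × EuclideanSpace ℝ (Fin 2))
    (hp : p ∈ diamond (callPt ℓ j) (revealPt ℓ j))
    (hq : q ∈ diamond (callPt ℓ k) (revealPt ℓ k))
    (hpq : causal p q) : p.1 = 0 ∧ q.1 = ℓ / 2 := by
  have hr3 : Real.sqrt 3 ^ 2 = 3 := Real.sq_sqrt (by norm_num)
  have hr0 : (0:ℝ) ≤ Real.sqrt 3 := Real.sqrt_nonneg 3
  have hrpos : (0:ℝ) < Real.sqrt 3 := Real.sqrt_pos.mpr (by norm_num)
  have Hl : Real.sqrt 3 ^ 2 * ℓ^2 = 3 * ℓ^2 := by rw [hr3]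
  obtain ⟨hp1, hp2⟩ := hp
  obtain ⟨hq1, hq2⟩ := hq
  unfold causal at hpq
  fin_cases j <;> fin_cases k <;>
    simp only [callPt, revealPt, causal, Fin.mk_zero, Fin.mk_one,
      show (⟨2, by norm_num⟩ : Fin 3) = 2 from rfl, Matrix.cons_val_zero,
      Matrix.cons_val_one, Matrix.head_cons, Matrix.cons_val_two, Matrix.tail_cons,
      sub_zero] at hp1 hp2 hq1 hq2
  · exact absurd rfl hjk
  · -- j = 0, k = 1 : forbidden
    refine (forbidden hℓ (ev (0) (0))
      (ev (3*ℓ/4) (Real.sqrt 3/4*ℓ)) p.2 q.2 ?_ hp1 hq2 hpq).elim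
    refine norm_eq_of _ _ (by positivity) ?_
    show (3*ℓ/4 - 0)^2 + (Real.sqrt 3/4*ℓ - 0)^2 = (Real.sqrt 3 * ℓ/2)^2
    linear_combination (-3*ℓ^2/16) * hr3
  · -- j = 0, k = 2 : allowed
    have e1 : ‖(ev (ℓ/4) (Real.sqrt 3/4*ℓ))
        - (ev (0) (0))‖ = ℓ/2 := by
      refine norm_eq_of _ _ (by positivity) ?_
      show (ℓ/4 - 0)^2 + (Real.sqrt 3/4*ℓ - 0)^2 = (ℓ/2)^2
      linear_combination (ℓ^2/16) * hr3
    have e2 : ‖(ev (ℓ/2) (0))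
        - (ev (0) (0))‖ = ℓ/2 := by
      refine norm_eq_of _ _ (by positivity) ?_
      show (ℓ/2 - 0)^2 + ((0:ℝ) - 0)^2 = (ℓ/2)^2
      ring
    have e3 : ‖(ev (ℓ/4) (Real.sqrt 3/4*ℓ))
        - (ev (ℓ/2) (Real.sqrt 3/2*ℓ))‖ = ℓ/2 := by
      refine norm_eq_of _ _ (by positivity) ?_
      show (ℓ/4 - ℓ/2)^2 + (Real.sqrt 3/4*ℓ - Real.sqrt 3/2*ℓ)^2 = (ℓ/2)^2
      linear_combination (ℓ^2/16) * hr3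
    obtain ⟨eP, emjP, emkP, eQ, emkQ, ePQ⟩ :=
      chainEq ℓ p.1 q.1 _ _ _ _ p.2 q.2 e1 e2 e3 hp1 hp2 hq1 hq2 hpq
    have E1 : (p.2 0 - 0)^2 + (p.2 1 - 0)^2 = p.1^2 := sq_of_norm_eq _ _ eP
    have E2 : (ℓ/2 - p.2 0)^2 + (0 - p.2 1)^2 = (ℓ/2 - p.1)^2 := sq_of_norm_eq _ _ emjP
    have E3 : (ℓ/4 - p.2 0)^2 + (Real.sqrt 3/4*ℓ - p.2 1)^2 = (ℓ/2 - p.1)^2 :=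
      sq_of_norm_eq _ _ emkP
    have hla : ℓ * (p.2 0) = ℓ * p.1 := by linarith [E1, E2]
    have ha : p.2 0 = p.1 := mul_left_cancel₀ (ne_of_gt hℓ) hla
    have hlb : ℓ * (Real.sqrt 3 * p.2 1) = ℓ * p.1 := by linarith [E1, E3, Hl, hla]
    rw [ha] at E1
    have hb2 : (p.2 1)^2 = 0 := by linarith [E1]
    have hb : p.2 1 = 0 := pow_eq_zero_iff (two_ne_zero) |>.mp hb2
    have ht : p.1 = 0 := by
      rw [hb] at hlb
      have h0 : ℓ * p.1 = 0 := by linarith [hlb]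
      exact (mul_eq_zero.mp h0).resolve_left (ne_of_gt hℓ)
    have F1 : (q.2 0 - p.2 0)^2 + (q.2 1 - p.2 1)^2 = (q.1 - p.1)^2 :=
      sq_of_norm_eq _ _ ePQ
    have F2 : (q.2 0 - ℓ/2)^2 + (q.2 1 - Real.sqrt 3/2*ℓ)^2 = q.1^2 :=
      sq_of_norm_eq _ _ eQ
    have F3 : (ℓ/4 - q.2 0)^2 + (Real.sqrt 3/4*ℓ - q.2 1)^2 = (ℓ/2 - q.1)^2 :=
      sq_of_norm_eq _ _ emkQ
    rw [ha, ht, hb] at F1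
    have hls : ℓ * q.1 = ℓ * (ℓ/2) := by linarith [F1, F2, F3, Hl]
    exact ⟨ht, mul_left_cancel₀ (ne_of_gt hℓ) hls⟩
  · -- j = 1, k = 0 : allowed
    have e1 : ‖(ev (ℓ/2) (0))
        - (ev (ℓ) (0))‖ = ℓ/2 := by
      refine norm_eq_of _ _ (by positivity) ?_
      show (ℓ/2 - ℓ)^2 + ((0:ℝ) - 0)^2 = (ℓ/2)^2
      ring
    have e2 : ‖(ev (3*ℓ/4) (Real.sqrt 3/4*ℓ))
        - (ev (ℓ) (0))‖ = ℓ/2 := by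
      refine norm_eq_of _ _ (by positivity) ?_
      show (3*ℓ/4 - ℓ)^2 + (Real.sqrt 3/4*ℓ - 0)^2 = (ℓ/2)^2
      linear_combination (ℓ^2/16) * hr3
    have e3 : ‖(ev (ℓ/2) (0))
        - (ev (0) (0))‖ = ℓ/2 := by
      refine norm_eq_of _ _ (by positivity) ?_
      show (ℓ/2 - 0)^2 + ((0:ℝ) - 0)^2 = (ℓ/2)^2
      ring
    obtain ⟨eP, emjP, emkP, eQ, emkQ, ePQ⟩ :=
      chainEq ℓ p.1 q.1 _ _ _ _ p.2 q.2 e1 e2 e3 hp1 hp2 hq1 hq2 hpq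
    have E1 : (p.2 0 - ℓ)^2 + (p.2 1 - 0)^2 = p.1^2 := sq_of_norm_eq _ _ eP
    have E2 : (3*ℓ/4 - p.2 0)^2 + (Real.sqrt 3/4*ℓ - p.2 1)^2 = (ℓ/2 - p.1)^2 :=
      sq_of_norm_eq _ _ emjP
    have E3 : (ℓ/2 - p.2 0)^2 + (0 - p.2 1)^2 = (ℓ/2 - p.1)^2 := sq_of_norm_eq _ _ emkP
    have hla : ℓ * (p.2 0) = ℓ * (ℓ - p.1) := by linarith [E1, E3]
    have ha : p.2 0 = ℓ - p.1 := mul_left_cancel₀ (ne_of_gt hℓ) hla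
    have hlb : ℓ * (Real.sqrt 3 * p.2 1) = ℓ * p.1 := by linarith [E2, E3, Hl, hla]
    rw [ha] at E1
    have hb2 : (p.2 1)^2 = 0 := by linarith [E1]
    have hb : p.2 1 = 0 := pow_eq_zero_iff (two_ne_zero) |>.mp hb2
    have ht : p.1 = 0 := by
      rw [hb] at hlb
      have h0 : ℓ * p.1 = 0 := by linarith [hlb]
      exact (mul_eq_zero.mp h0).resolve_left (ne_of_gt hℓ)
    have F1 : (q.2 0 - p.2 0)^2 + (q.2 1 - p.2 1)^2 = (q.1 - p.1)^2 :=
      sq_of_norm_eq _ _ ePQ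
    have F2 : (q.2 0 - 0)^2 + (q.2 1 - 0)^2 = q.1^2 := sq_of_norm_eq _ _ eQ
    have F3 : (ℓ/2 - q.2 0)^2 + (0 - q.2 1)^2 = (ℓ/2 - q.1)^2 := sq_of_norm_eq _ _ emkQ
    rw [ha, ht, hb] at F1
    have hls : ℓ * q.1 = ℓ * (ℓ/2) := by linarith [F1, F2, F3]
    exact ⟨ht, mul_left_cancel₀ (ne_of_gt hℓ) hls⟩
  · exact absurd rfl hjk
  · -- j = 1, k = 2 : forbidden
    refine (forbidden hℓ (ev (ℓ) (0))
      (ev (ℓ/4) (Real.sqrt 3/4*ℓ)) p.2 q.2 ?_ hp1 hq2 hpq).elim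
    refine norm_eq_of _ _ (by positivity) ?_
    show (ℓ/4 - ℓ)^2 + (Real.sqrt 3/4*ℓ - 0)^2 = (Real.sqrt 3 * ℓ/2)^2
    linear_combination (-3*ℓ^2/16) * hr3
  · -- j = 2, k = 0 : forbidden
    refine (forbidden hℓ (ev (ℓ/2) (Real.sqrt 3/2*ℓ))
      (ev (ℓ/2) (0)) p.2 q.2 ?_ hp1 hq2 hpq).elim
    refine norm_eq_of _ _ (by positivity) ?_
    show (ℓ/2 - ℓ/2)^2 + ((0:ℝ) - Real.sqrt 3/2*ℓ)^2 = (Real.sqrt 3 * ℓ/2)^2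
    ring
  · -- j = 2, k = 1 : allowed
    have e1 : ‖(ev (3*ℓ/4) (Real.sqrt 3/4*ℓ))
        - (ev (ℓ/2) (Real.sqrt 3/2*ℓ))‖ = ℓ/2 := by
      refine norm_eq_of _ _ (by positivity) ?_
      show (3*ℓ/4 - ℓ/2)^2 + (Real.sqrt 3/4*ℓ - Real.sqrt 3/2*ℓ)^2 = (ℓ/2)^2
      linear_combination (ℓ^2/16) * hr3
    have e2 : ‖(ev (ℓ/4) (Real.sqrt 3/4*ℓ))
        - (ev (ℓ/2) (Real.sqrt 3/2*ℓ))‖ = ℓ/2 := by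
      refine norm_eq_of _ _ (by positivity) ?_
      show (ℓ/4 - ℓ/2)^2 + (Real.sqrt 3/4*ℓ - Real.sqrt 3/2*ℓ)^2 = (ℓ/2)^2
      linear_combination (ℓ^2/16) * hr3
    have e3 : ‖(ev (3*ℓ/4) (Real.sqrt 3/4*ℓ))
        - (ev (ℓ) (0))‖ = ℓ/2 := by
      refine norm_eq_of _ _ (by positivity) ?_
      show (3*ℓ/4 - ℓ)^2 + (Real.sqrt 3/4*ℓ - 0)^2 = (ℓ/2)^2
      linear_combination (ℓ^2/16) * hr3
    obtain ⟨eP, emjP, emkP, eQ, emkQ, ePQ⟩ :=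
      chainEq ℓ p.1 q.1 _ _ _ _ p.2 q.2 e1 e2 e3 hp1 hp2 hq1 hq2 hpq
    have E1 : (p.2 0 - ℓ/2)^2 + (p.2 1 - Real.sqrt 3/2*ℓ)^2 = p.1^2 :=
      sq_of_norm_eq _ _ eP
    have E2 : (ℓ/4 - p.2 0)^2 + (Real.sqrt 3/4*ℓ - p.2 1)^2 = (ℓ/2 - p.1)^2 :=
      sq_of_norm_eq _ _ emjP
    have E3 : (3*ℓ/4 - p.2 0)^2 + (Real.sqrt 3/4*ℓ - p.2 1)^2 = (ℓ/2 - p.1)^2 :=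
      sq_of_norm_eq _ _ emkP
    have hla : ℓ * (p.2 0) = ℓ * (ℓ/2) := by linarith [E2, E3]
    have ha : p.2 0 = ℓ/2 := mul_left_cancel₀ (ne_of_gt hℓ) hla
    rw [ha] at E1 E2
    have h1 : ℓ * (Real.sqrt 3 * p.2 1) = 3*ℓ^2/2 - 2*(ℓ*p.1) := by
      linarith [E1, E2, Hl]
    have h2 : (p.2 1)^2 = p.1^2 + 3*ℓ^2/4 - 2*(ℓ*p.1) := by linarith [E1, h1, Hl]
    have h3 : (ℓ*(Real.sqrt 3 * p.2 1))^2 = 3*(ℓ^2*(p.2 1)^2) := by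
      rw [mul_pow, mul_pow, hr3]; ring
    have h4 : ℓ^2 * p.1^2 = 0 := by
      linear_combination (-(ℓ*(Real.sqrt 3*(p.2 1)) + (3*ℓ^2/2 - 2*(ℓ*p.1))))*h1
        + h3 + 3*ℓ^2*h2
    have ht2 : p.1^2 = 0 :=
      (mul_eq_zero.mp h4).resolve_left (pow_ne_zero 2 (ne_of_gt hℓ))
    have ht : p.1 = 0 := pow_eq_zero_iff (two_ne_zero) |>.mp ht2
    rw [ht] at h1
    have hrb : Real.sqrt 3 * p.2 1 = 3*ℓ/2 :=
      mul_left_cancel₀ (ne_of_gt hℓ) (by linarith [h1])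
    have hx : Real.sqrt 3 * (Real.sqrt 3 * ℓ / 2) = 3*ℓ/2 := by
      rw [show Real.sqrt 3 * (Real.sqrt 3 * ℓ / 2) = Real.sqrt 3 ^2 * ℓ/2 from by ring,
        hr3]
    have hb : p.2 1 = Real.sqrt 3 * ℓ / 2 :=
      mul_left_cancel₀ (ne_of_gt hrpos) (hrb.trans hx.symm)
    have F1 : (q.2 0 - p.2 0)^2 + (q.2 1 - p.2 1)^2 = (q.1 - p.1)^2 :=
      sq_of_norm_eq _ _ ePQ
    have F2 : (q.2 0 - ℓ)^2 + (q.2 1 - 0)^2 = q.1^2 := sq_of_norm_eq _ _ eQ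
    have F3 : (3*ℓ/4 - q.2 0)^2 + (Real.sqrt 3/4*ℓ - q.2 1)^2 = (ℓ/2 - q.1)^2 :=
      sq_of_norm_eq _ _ emkQ
    rw [ha, ht, hb] at F1
    have hls : ℓ * q.1 = ℓ * (ℓ/2) := by linarith [F1, F2, F3, Hl]
    exact ⟨ht, mul_left_cancel₀ (ne_of_gt hℓ) hls⟩
  · exact absurd rfl hjk

/-- In the equilateral-triangle configuration there is no causal curve through all
three causal diamonds: there are no points `p j ∈ D j` and no permutation `σ` of
`{0,1,2}` with `p (σ 0) ≼ p (σ 1) ≼ p (σ 2)`. -/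
theorem no_causal_curve_through_three_diamonds (ℓ : ℝ) (hℓ : 0 < ℓ) :
    ¬ ∃ (p : Fin 3 → ℝ × EuclideanSpace ℝ (Fin 2)) (σ : Equiv.Perm (Fin 3)),
        (∀ j : Fin 3, p j ∈ diamond (callPt ℓ j) (revealPt ℓ j)) ∧
        causal (p (σ 0)) (p (σ 1)) ∧ causal (p (σ 1)) (p (σ 2)) := by
  rintro ⟨p, σ, hmem, h01, h12⟩
  have h1 := key ℓ hℓ (σ 0) (σ 1) (σ.injective.ne (by decide)) _ _
    (hmem (σ 0)) (hmem (σ 1)) h01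
  have h2 := key ℓ hℓ (σ 1) (σ 2) (σ.injective.ne (by decide)) _ _
    (hmem (σ 1)) (hmem (σ 2)) h12
  have := h1.2
  have := h2.1
  linarith
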